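/- Under the same assumptions (U ∈ C³ with ‖D²U‖ ≤ L, ‖D³U‖ ≤ L_H, L(T² + Th) ≤ 1/6, T/h ∈ ℕ), the map Φ defined by q̃_T(x,v) = q̃_T(y,Φ(v)) satisfies ‖DΦ(v) − I_d‖ ≤ (1/2) min(1, 11 L_H T² ‖x − y‖) for all v ∈ ℝ^d. -/

import Mathlib

set_option maxHeartbeats 1600000

open MeasureTheory intervalIntegral

noncomputable def gridFloor (h t : ℝ) : ℝ := h * ⌊t / h⌋
noncomputable def gridCeil (h t : ℝ) : ℝ := h * ⌈t / h⌉


section OneshotAux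

variable {E : Type*} [NormedAddCommGroup E] [NormedSpace ℝ E]

/-- One step of the Verlet integrator. -/
noncomputable def vstep (g : E → E) (h : ℝ) (p : E × E) : E × E :=
  (p.1 + h • p.2 - (h ^ 2 / 2) • g p.1,
   p.2 - (h / 2) • (g p.1 + g (p.1 + h • p.2 - (h ^ 2 / 2) • g p.1)))

noncomputable def vflow (g : E → E) (h : ℝ) (k : ℕ) (p : E × E) : E × E :=
  (vstep g h)^[k] p

lemma vflow_zero (g : E → E) (h : ℝ) (p : E × E) : vflow g h 0 p = p := rfl

lemma vflow_succ (g : E → E) (h : ℝ) (k : ℕ) (p : E × E) :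
    vflow g h (k + 1) p = vstep g h (vflow g h k p) :=
  Function.iterate_succ_apply' _ _ _

lemma vflow_succ_fst (g : E → E) (h : ℝ) (k : ℕ) (p : E × E) :
    (vflow g h (k + 1) p).1 = (vflow g h k p).1 + h • (vflow g h k p).2
      - (h ^ 2 / 2) • g (vflow g h k p).1 := by
  rw [vflow_succ]; rfl

lemma vflow_succ_snd (g : E → E) (h : ℝ) (k : ℕ) (p : E × E) :
    (vflow g h (k + 1) p).2 = (vflow g h k p).2
      - (h / 2) • (g (vflow g h k p).1 + g ((vflow g h (k + 1) p).1)) := by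
  rw [vflow_succ]; rfl

lemma gridFloor_eq {h : ℝ} (hh : 0 < h) {j : ℕ} {s : ℝ}
    (h1 : (j : ℝ) * h ≤ s) (h2 : s < ((j : ℝ) + 1) * h) :
    gridFloor h s = (j : ℝ) * h := by
  have hfl : ⌊s / h⌋ = (j : ℤ) := by
    rw [Int.floor_eq_iff]
    constructor
    · rw [le_div_iff₀ hh]; push_cast; linarith
    · rw [div_lt_iff₀ hh]; push_cast; linarith
  rw [gridFloor, hfl]; push_cast; ring

lemma gridCeil_eq {h : ℝ} (hh : 0 < h) {j : ℕ} {s : ℝ}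
    (h1 : (j : ℝ) * h < s) (h2 : s ≤ ((j : ℝ) + 1) * h) :
    gridCeil h s = ((j : ℝ) + 1) * h := by
  have hfl : ⌈s / h⌉ = (j : ℤ) + 1 := by
    rw [Int.ceil_eq_iff]
    constructor
    · push_cast; rw [lt_div_iff₀ hh]; push_cast; linarith
    · rw [div_le_iff₀ hh]; push_cast; linarith
  rw [gridCeil, hfl]; push_cast; ring

lemma grid_eq [CompleteSpace E] (g : E → E) {h : ℝ} (hh : 0 < h)
    (q w : E → E → ℝ → E) (x v : E)
    (hq : ∀ t, q x v t = x + ∫ s in (0:ℝ)..t,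
      (w x v (gridFloor h s) - (s - gridFloor h s) • g (q x v (gridFloor h s))))
    (hw : ∀ t, w x v t = v - (1/2 : ℝ) • ∫ s in (0:ℝ)..t,
      (g (q x v (gridFloor h s)) + g (q x v (gridCeil h s)))) :
    ∀ k : ℕ, q x v ((k : ℝ) * h) = (vflow g h k (x, v)).1 ∧
      w x v ((k : ℝ) * h) = (vflow g h k (x, v)).2 := by
  set f : ℝ → E := fun s => w x v (gridFloor h s)
      - (s - gridFloor h s) • g (q x v (gridFloor h s)) with hf
  set fw : ℝ → E := fun s => g (q x v (gridFloor h s)) + g (q x v (gridCeil h s)) with hfw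
  have hqf : ∀ t, q x v t = x + ∫ s in (0:ℝ)..t, f s := hq
  have hwf : ∀ t, w x v t = v - (1/2 : ℝ) • ∫ s in (0:ℝ)..t, fw s := hw
  suffices H : ∀ k : ℕ, (q x v ((k : ℝ) * h) = (vflow g h k (x, v)).1 ∧
      w x v ((k : ℝ) * h) = (vflow g h k (x, v)).2) ∧
      IntervalIntegrable f volume 0 ((k : ℝ) * h) ∧
      IntervalIntegrable fw volume 0 ((k : ℝ) * h) from fun k => (H k).1
  intro k
  induction k with
  | zero =>
    have h0 : ((0:ℕ) : ℝ) * h = 0 := by norm_num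
    rw [h0]
    refine ⟨⟨?_, ?_⟩, IntervalIntegrable.refl, IntervalIntegrable.refl⟩
    · rw [hqf 0, intervalIntegral.integral_same, add_zero]; rfl
    · rw [hwf 0, intervalIntegral.integral_same, smul_zero, sub_zero]; rfl
  | succ k IH =>
    obtain ⟨⟨hqk, hwk⟩, hif, hifw⟩ := IH
    have hb : ((k + 1 : ℕ) : ℝ) * h = (k : ℝ) * h + h := by push_cast; ring
    have hab : (k : ℝ) * h ≤ (k : ℝ) * h + h := by linarith
    have hsing : (volume : Measure ℝ) {(k : ℝ) * h + h} = 0 := measure_singleton _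
    have hane : ∀ᵐ s : ℝ, s ≠ (k : ℝ) * h + h := by
      refine ae_iff.2 ?_
      simpa using hsing
    have hfloor : ∀ s : ℝ, (k : ℝ) * h ≤ s → s < (k : ℝ) * h + h → gridFloor h s = (k : ℝ) * h := by
      intro s h1 h2
      exact gridFloor_eq hh h1 (by linarith [h2])
    have hceil : ∀ s : ℝ, (k : ℝ) * h < s → s ≤ (k : ℝ) * h + h →
        gridCeil h s = (k : ℝ) * h + h := by
      intro s h1 h2
      have := gridCeil_eq hh h1 (s := s) (by linarith : s ≤ ((k : ℝ) + 1) * h)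
      rw [this]; ring
    -- description of f on the interval
    have hfs : ∀ s : ℝ, (k : ℝ) * h ≤ s → s < (k : ℝ) * h + h →
        f s = (vflow g h k (x, v)).2
          - (s - (k : ℝ) * h) • g ((vflow g h k (x, v)).1) := by
      intro s h1 h2
      rw [hf]
      simp only
      rw [hfloor s h1 h2, hqk, hwk]
    have hcont : Continuous fun s : ℝ => (vflow g h k (x, v)).2
        - (s - (k : ℝ) * h) • g ((vflow g h k (x, v)).1) :=
      continuous_const.sub ((continuous_id.sub continuous_const).smul continuous_const)
    have hint : IntervalIntegrable f volume ((k : ℝ) * h) ((k : ℝ) * h + h) := by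
      refine (hcont.intervalIntegrable _ _).congr_ae ?_
      filter_upwards [ae_restrict_of_ae hane, ae_restrict_mem measurableSet_uIoc] with s hne hmem
      rw [Set.uIoc_of_le hab] at hmem
      exact (hfs s hmem.1.le (lt_of_le_of_ne hmem.2 hne)).symm
    have hval : ∫ s in ((k : ℝ) * h)..((k : ℝ) * h + h), f s
        = h • (vflow g h k (x, v)).2 - (h ^ 2 / 2) • g ((vflow g h k (x, v)).1) := by
      have h1 : ∫ s in ((k : ℝ) * h)..((k : ℝ) * h + h), f s
          = ∫ s in ((k : ℝ) * h)..((k : ℝ) * h + h),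
              ((vflow g h k (x, v)).2 - (s - (k : ℝ) * h) • g ((vflow g h k (x, v)).1)) := by
        refine intervalIntegral.integral_congr_ae ?_
        filter_upwards [hane] with s hne hmem
        rw [Set.uIoc_of_le hab] at hmem
        exact hfs s hmem.1.le (lt_of_le_of_ne hmem.2 hne)
      have hc2 : Continuous fun s : ℝ => (s - (k : ℝ) * h) • g ((vflow g h k (x, v)).1) := by
        fun_prop
      rw [h1, intervalIntegral.integral_sub intervalIntegrable_const
        (hc2.intervalIntegrable _ _),
        intervalIntegral.integral_const, intervalIntegral.integral_smul_const]
      have h2 : ∫ s in ((k : ℝ) * h)..((k : ℝ) * h + h), (s - (k : ℝ) * h)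
          = h ^ 2 / 2 := by
        rw [intervalIntegral.integral_sub intervalIntegrable_id intervalIntegrable_const,
          integral_id, intervalIntegral.integral_const]
        simp only [smul_eq_mul]
        ring
      rw [h2]
      congr 1
      rw [add_sub_cancel_left]
    have hq1 : q x v ((k : ℝ) * h + h) = (vflow g h (k + 1) (x, v)).1 := by
      rw [hqf ((k : ℝ) * h + h),
        ← intervalIntegral.integral_add_adjacent_intervals hif hint, hval,
        vflow_succ_fst, ← add_assoc, ← hqf ((k : ℝ) * h), hqk]
      abel
    -- now the velocity part
    have hfws : ∀ s : ℝ, (k : ℝ) * h < s → s < (k : ℝ) * h + h →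
        fw s = g ((vflow g h k (x, v)).1) + g ((vflow g h (k + 1) (x, v)).1) := by
      intro s h1 h2
      rw [hfw]
      simp only
      rw [hfloor s h1.le h2, hceil s h1 h2.le, hqk, hq1]
    have hintw : IntervalIntegrable fw volume ((k : ℝ) * h) ((k : ℝ) * h + h) := by
      refine ((continuous_const :
        Continuous fun _ : ℝ => g ((vflow g h k (x, v)).1)
          + g ((vflow g h (k + 1) (x, v)).1)).intervalIntegrable _ _).congr_ae ?_
      filter_upwards [ae_restrict_of_ae hane, ae_restrict_mem measurableSet_uIoc] with s hne hmem
      rw [Set.uIoc_of_le hab] at hmem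
      exact (hfws s hmem.1 (lt_of_le_of_ne hmem.2 hne)).symm
    have hvalw : ∫ s in ((k : ℝ) * h)..((k : ℝ) * h + h), fw s
        = h • (g ((vflow g h k (x, v)).1) + g ((vflow g h (k + 1) (x, v)).1)) := by
      have h1 : ∫ s in ((k : ℝ) * h)..((k : ℝ) * h + h), fw s
          = ∫ s in ((k : ℝ) * h)..((k : ℝ) * h + h),
              (g ((vflow g h k (x, v)).1) + g ((vflow g h (k + 1) (x, v)).1)) := by
        refine intervalIntegral.integral_congr_ae ?_
        filter_upwards [hane] with s hne hmem
        rw [Set.uIoc_of_le hab] at hmem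
        exact hfws s hmem.1 (lt_of_le_of_ne hmem.2 hne)
      rw [h1, intervalIntegral.integral_const, add_sub_cancel_left]
    have hw1 : w x v ((k : ℝ) * h + h) = (vflow g h (k + 1) (x, v)).2 := by
      rw [hwf ((k : ℝ) * h + h), ← intervalIntegral.integral_add_adjacent_intervals hifw hintw,
        hvalw, vflow_succ_snd, ← hwk, hwf ((k : ℝ) * h)]
      module
    refine ⟨⟨?_, ?_⟩, ?_, ?_⟩
    · rw [hb]; exact hq1
    · rw [hb]; exact hw1
    · rw [hb]; exact hif.trans hint
    · rw [hb]; exact hifw.trans hintw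

end OneshotAux

section A
variable {E : Type*} [NormedAddCommGroup E] [NormedSpace ℝ E]

noncomputable def vjac (H : ℕ → E →L[ℝ] E) (h : ℝ) : ℕ → ((E →L[ℝ] E) × (E →L[ℝ] E))
  | 0 => (0, 1)
  | (k+1) =>
      ((vjac H h k).1 + h • (vjac H h k).2 - (h ^ 2 / 2) • ((H k).comp (vjac H h k).1),
       (vjac H h k).2 - (h / 2) • ((H k).comp (vjac H h k).1 +
         (H (k+1)).comp ((vjac H h k).1 + h • (vjac H h k).2
           - (h ^ 2 / 2) • ((H k).comp (vjac H h k).1))))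

lemma vjac_zero (H : ℕ → E →L[ℝ] E) (h : ℝ) : vjac H h 0 = (0, 1) := rfl

lemma vjac_succ_fst (H : ℕ → E →L[ℝ] E) (h : ℝ) (k : ℕ) :
    (vjac H h (k+1)).1 = (vjac H h k).1 + h • (vjac H h k).2
      - (h ^ 2 / 2) • ((H k).comp (vjac H h k).1) := by
  rw [vjac]

lemma vjac_succ_snd (H : ℕ → E →L[ℝ] E) (h : ℝ) (k : ℕ) :
    (vjac H h (k+1)).2 = (vjac H h k).2 - (h / 2) • ((H k).comp (vjac H h k).1 +
      (H (k+1)).comp ((vjac H h (k+1)).1)) := by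
  rw [vjac_succ_fst, vjac]
end A
section B
variable {E : Type*} [NormedAddCommGroup E] [NormedSpace ℝ E]

lemma vflow_hasFDerivAt (g : E → E) (hess : E → (E →L[ℝ] E))
    (hg : ∀ z, HasFDerivAt g (hess z) z) (h : ℝ) (x v : E) :
    ∀ k : ℕ,
      HasFDerivAt (fun v' => (vflow g h k (x, v')).1)
        ((vjac (fun j => hess ((vflow g h j (x, v)).1)) h k).1) v ∧
      HasFDerivAt (fun v' => (vflow g h k (x, v')).2)
        ((vjac (fun j => hess ((vflow g h j (x, v)).1)) h k).2) v := by
  intro k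
  induction k with
  | zero =>
    constructor
    · simpa [vflow, vjac_zero] using hasFDerivAt_const x v
    · simp only [vflow, vjac_zero, ContinuousLinearMap.one_def]; exact hasFDerivAt_id v
  | succ k IH =>
    obtain ⟨IH1, IH2⟩ := IH
    have hfst : HasFDerivAt (fun v' => (vflow g h (k+1) (x, v')).1)
        ((vjac (fun j => hess ((vflow g h j (x, v)).1)) h (k+1)).1) v := by
      have hcomp : HasFDerivAt (fun v' => g ((vflow g h k (x, v')).1))
          ((hess ((vflow g h k (x, v)).1)).comp
            ((vjac (fun j => hess ((vflow g h j (x, v)).1)) h k).1)) v :=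
        (hg _).comp v IH1
      have hsum := (IH1.add (IH2.const_smul h)).sub (hcomp.const_smul (h^2/2))
      have heq : (fun v' => (vflow g h (k+1) (x, v')).1)
          = fun v' => (vflow g h k (x, v')).1 + h • (vflow g h k (x, v')).2
              - (h^2/2) • g ((vflow g h k (x, v')).1) :=
        funext fun v' => vflow_succ_fst g h k (x, v')
      rw [heq, vjac_succ_fst]
      exact hsum
    refine ⟨hfst, ?_⟩
    have hcomp1 : HasFDerivAt (fun v' => g ((vflow g h k (x, v')).1))
        ((hess ((vflow g h k (x, v)).1)).comp
          ((vjac (fun j => hess ((vflow g h j (x, v)).1)) h k).1)) v :=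
      (hg _).comp v IH1
    have hcomp2 : HasFDerivAt (fun v' => g ((vflow g h (k+1) (x, v')).1))
        ((hess ((vflow g h (k+1) (x, v)).1)).comp
          ((vjac (fun j => hess ((vflow g h j (x, v)).1)) h (k+1)).1)) v :=
      (hg _).comp v hfst
    have hsum := IH2.sub ((hcomp1.add hcomp2).const_smul (h/2))
    have heq : (fun v' => (vflow g h (k+1) (x, v')).2)
        = fun v' => (vflow g h k (x, v')).2
            - (h/2) • (g ((vflow g h k (x, v')).1) + g ((vflow g h (k+1) (x, v')).1)) :=
      funext fun v' => vflow_succ_snd g h k (x, v')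
    rw [heq, vjac_succ_snd]
    exact hsum
end B
section C
variable {E : Type*} [NormedAddCommGroup E] [NormedSpace ℝ E]

lemma rsmul_norm {F : Type*} [SeminormedAddCommGroup F] [NormedSpace ℝ F] {c : ℝ}
    (hc : 0 ≤ c) (z : F) : ‖c • z‖ = c * ‖z‖ := by
  rw [norm_smul c z, Real.norm_of_nonneg hc]

lemma rsmul_norm_clm {c : ℝ} (hc : 0 ≤ c) (z : E →L[ℝ] E) : ‖c • z‖ = c * ‖z‖ := by
  rw [norm_smul c z, Real.norm_of_nonneg hc]

lemma norm_one_smul_le {c : ℝ} (hc : 0 ≤ c) : ‖c • (1 : E →L[ℝ] E)‖ ≤ c := by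
  rw [rsmul_norm_clm hc (1 : E →L[ℝ] E)]
  have h1 : ‖(1 : E →L[ℝ] E)‖ ≤ 1 := by
    rw [ContinuousLinearMap.one_def]; exact ContinuousLinearMap.norm_id_le
  nlinarith [norm_nonneg (1 : E →L[ℝ] E)]

lemma vjac_bound (H : ℕ → E →L[ℝ] E) {h L : ℝ} (hh : 0 < h) (hL : 0 ≤ L)
    (hHL : ∀ j, ‖H j‖ ≤ L) (N : ℕ)
    (hsmall : L * (((N:ℝ)*h)^2 + ((N:ℝ)*h)*h) ≤ 1/6) :
    ∀ k, k ≤ N →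
      ‖(vjac H h k).1 - ((k:ℝ)*h) • 1‖ ≤ ((k:ℝ)*h)/5 ∧
      ‖(vjac H h k).2 - 1‖ ≤ (3/5)*L*h^2*(k:ℝ)*((k:ℝ)+1) := by
  intro k
  induction k with
  | zero => intro _; simp [vjac_zero]
  | succ k IH =>
    intro hk1
    obtain ⟨ha, hb⟩ := IH (Nat.le_of_succ_le hk1)
    have hk' : (k:ℝ) + 1 ≤ (N:ℝ) := by exact_mod_cast hk1
    have hk0 : (0:ℝ) ≤ (k:ℝ) := Nat.cast_nonneg k
    have nA : ‖(vjac H h k).1‖ ≤ (6/5)*((k:ℝ)*h) := by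
      have h1 := norm_add_le ((vjac H h k).1 - ((k:ℝ)*h) • (1 : E →L[ℝ] E)) (((k:ℝ)*h) • 1)
      rw [sub_add_cancel] at h1
      have h2 := norm_one_smul_le (E := E) (c := (k:ℝ)*h) (by positivity)
      linarith
    have nHA : ‖(H k).comp (vjac H h k).1‖ ≤ L * ((6/5)*((k:ℝ)*h)) :=
      le_trans (ContinuousLinearMap.opNorm_comp_le _ _)
        (mul_le_mul (hHL k) nA (norm_nonneg _) hL)
    have key1 : (vjac H h (k+1)).1 - (((k+1:ℕ):ℝ)*h) • (1 : E →L[ℝ] E)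
        = ((vjac H h k).1 - ((k:ℝ)*h) • 1) + h • ((vjac H h k).2 - 1)
          - (h^2/2) • ((H k).comp (vjac H h k).1) := by
      rw [vjac_succ_fst]; push_cast; module
    have goal1 : ‖(vjac H h (k+1)).1 - (((k+1:ℕ):ℝ)*h) • (1 : E →L[ℝ] E)‖
        ≤ (((k:ℝ)+1)*h)/5 := by
      rw [key1]
      have t1 := norm_sub_le (((vjac H h k).1 - ((k:ℝ)*h) • (1 : E →L[ℝ] E))
        + h • ((vjac H h k).2 - 1)) ((h^2/2) • ((H k).comp (vjac H h k).1))
      have t2 := norm_add_le ((vjac H h k).1 - ((k:ℝ)*h) • (1 : E →L[ℝ] E))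
        (h • ((vjac H h k).2 - 1))
      have s1 : ‖h • ((vjac H h k).2 - 1)‖ = h * ‖(vjac H h k).2 - 1‖ :=
        rsmul_norm_clm hh.le _
      have s2 : ‖(h^2/2) • ((H k).comp (vjac H h k).1)‖
          = (h^2/2) * ‖(H k).comp (vjac H h k).1‖ :=
        rsmul_norm_clm (by positivity) _
      rw [s1] at t2
      rw [s2] at t1
      have p1 : (k:ℝ)*h ≤ (N:ℝ)*h := by nlinarith
      have p2 : ((k:ℝ)+2)*h ≤ (N:ℝ)*h + h := by nlinarith
      have p3 : ((k:ℝ)*h)*(((k:ℝ)+2)*h) ≤ ((N:ℝ)*h)^2 + ((N:ℝ)*h)*h := by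
        nlinarith [mul_le_mul p1 p2 (by positivity : (0:ℝ) ≤ ((k:ℝ)+2)*h) (by positivity)]
      have p4 : L*(((k:ℝ)*h)*(((k:ℝ)+2)*h)) ≤ 1/6 :=
        le_trans (mul_le_mul_of_nonneg_left p3 hL) hsmall
      have p5 : (3/5)*h*(L*(((k:ℝ)*h)*(((k:ℝ)+2)*h))) ≤ (3/5)*h*(1/6) :=
        mul_le_mul_of_nonneg_left p4 (by positivity)
      have hb' : h * ‖(vjac H h k).2 - 1‖ ≤ h * ((3/5)*L*h^2*(k:ℝ)*((k:ℝ)+1)) :=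
        mul_le_mul_of_nonneg_left hb hh.le
      have nHA' : (h^2/2) * ‖(H k).comp (vjac H h k).1‖ ≤ (h^2/2) * (L * ((6/5)*((k:ℝ)*h))) :=
        mul_le_mul_of_nonneg_left nHA (by positivity)
      linarith [t1, t2, ha]
    constructor
    · have : (((k+1:ℕ)):ℝ) = (k:ℝ)+1 := by push_cast; ring
      rw [show ((((k+1):ℕ)):ℝ) * h = (((k:ℝ)+1))*h by push_cast; ring] at goal1 ⊢
      exact goal1
    · -- second component
      have ha1 : ‖(vjac H h (k+1)).1 - (((k:ℝ)+1)*h) • (1 : E →L[ℝ] E)‖ ≤ (((k:ℝ)+1)*h)/5 := by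
        have := goal1; rwa [show ((((k+1):ℕ)):ℝ) * h = (((k:ℝ)+1))*h by push_cast; ring] at this
      have nA1 : ‖(vjac H h (k+1)).1‖ ≤ (6/5)*(((k:ℝ)+1)*h) := by
        have h1 := norm_add_le ((vjac H h (k+1)).1 - (((k:ℝ)+1)*h) • (1 : E →L[ℝ] E))
          ((((k:ℝ)+1)*h) • 1)
        rw [sub_add_cancel] at h1
        have h2 := norm_one_smul_le (E := E) (c := ((k:ℝ)+1)*h) (by positivity)
        linarith
      have nHA1 : ‖(H (k+1)).comp (vjac H h (k+1)).1‖ ≤ L * ((6/5)*(((k:ℝ)+1)*h)) :=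
        le_trans (ContinuousLinearMap.opNorm_comp_le _ _)
          (mul_le_mul (hHL (k+1)) nA1 (norm_nonneg _) hL)
      have key2 : (vjac H h (k+1)).2 - 1
          = ((vjac H h k).2 - 1) - (h/2) • ((H k).comp (vjac H h k).1
              + (H (k+1)).comp ((vjac H h (k+1)).1)) := by
        rw [vjac_succ_snd]; module
      rw [key2]
      have t1 := norm_sub_le ((vjac H h k).2 - 1)
        ((h/2) • ((H k).comp (vjac H h k).1 + (H (k+1)).comp ((vjac H h (k+1)).1)))
      have t2 := norm_add_le ((H k).comp (vjac H h k).1) ((H (k+1)).comp ((vjac H h (k+1)).1))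
      rw [rsmul_norm_clm (by positivity : (0:ℝ) ≤ h/2) ((H k).comp (vjac H h k).1
        + (H (k+1)).comp ((vjac H h (k+1)).1))] at t1
      have t3 : (h/2) * ‖(H k).comp (vjac H h k).1 + (H (k+1)).comp ((vjac H h (k+1)).1)‖
          ≤ (h/2) * (L * ((6/5)*((k:ℝ)*h)) + L * ((6/5)*(((k:ℝ)+1)*h))) := by
        refine mul_le_mul_of_nonneg_left ?_ (by positivity)
        linarith [t2, nHA, nHA1]
      have : ((((k+1):ℕ)):ℝ) = (k:ℝ)+1 := by push_cast; ring
      rw [this]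
      linarith [t1, hb, t3, mul_nonneg hL (sq_nonneg h)]
end C
section D
variable {E : Type*} [NormedAddCommGroup E] [NormedSpace ℝ E]

lemma stepD2_real (L K h kk nX nE S : ℝ)
    (t1 : nX ≤ nE + h/2 * S)
    (he : nE ≤ 6/5*L*K*(kk*h))
    (c1 : h/2 * S ≤ h/2 * (L*(3/5*L*h^2*kk^2*K + K) + L*(3/5*L*h^2*(kk+1)^2*K + K)))
    (c3 : L*(kk*h)^2*(L*h*K) ≤ 1/6*(L*h*K))
    (c3' : L*((kk+1)*h)^2*(L*h*K) ≤ 1/6*(L*h*K))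
    (c5 : 0 ≤ L*h*K) :
    nX ≤ 6/5*L*K*((kk+1)*h) := by linarith

lemma vflow_diff_bound (g : E → E) {L h : ℝ} (hL : 0 ≤ L)
    (hg : ∀ a b : E, ‖g a - g b‖ ≤ L * ‖a - b‖) (hh : 0 < h) (N : ℕ)
    (hsmall : L * (((N:ℝ)*h)^2 + ((N:ℝ)*h)*h) ≤ 1/6)
    (x v y u : E) :
    ∀ k, k ≤ N →
      ‖(vflow g h k (x,v)).1 - (vflow g h k (y,u)).1 - ((x-y) + ((k:ℝ)*h) • (v-u))‖
        ≤ (3/5)*L*h^2*(k:ℝ)^2*(‖x-y‖ + ((N:ℝ)*h)*‖v-u‖) ∧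
      ‖(vflow g h k (x,v)).2 - (vflow g h k (y,u)).2 - (v-u)‖
        ≤ (6/5)*L*(‖x-y‖ + ((N:ℝ)*h)*‖v-u‖)*((k:ℝ)*h) := by
  set K : ℝ := ‖x-y‖ + ((N:ℝ)*h)*‖v-u‖ with hK
  have hK0 : 0 ≤ K := by positivity
  intro k
  induction k with
  | zero =>
    intro _
    constructor
    · simp [vflow]
    · simp [vflow]
  | succ k IH =>
    intro hk1
    obtain ⟨hd, he⟩ := IH (Nat.le_of_succ_le hk1)
    have hk' : (k:ℝ) + 1 ≤ (N:ℝ) := by exact_mod_cast hk1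
    have hk0 : (0:ℝ) ≤ (k:ℝ) := Nat.cast_nonneg k
    have hNh : (0:ℝ) ≤ (N:ℝ)*h := by positivity
    -- abbreviations are spelled out
    have q1 : L*((k:ℝ)*h)^2 ≤ 1/6 := by
      nlinarith [mul_le_mul_of_nonneg_left
        (mul_le_mul (by nlinarith : (k:ℝ)*h ≤ (N:ℝ)*h) (by nlinarith : (k:ℝ)*h ≤ (N:ℝ)*h)
          (by positivity) hNh) hL, mul_nonneg (mul_nonneg hL hNh) hh.le]
    have q1' : L*(((k:ℝ)+1)*h)^2 ≤ 1/6 := by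
      nlinarith [mul_le_mul_of_nonneg_left
        (mul_le_mul (by nlinarith : ((k:ℝ)+1)*h ≤ (N:ℝ)*h) (by nlinarith : ((k:ℝ)+1)*h ≤ (N:ℝ)*h)
          (by positivity) hNh) hL, mul_nonneg (mul_nonneg hL hNh) hh.le]
    -- size of the position difference at step k
    have hsize : ‖(vflow g h k (x,v)).1 - (vflow g h k (y,u)).1‖
        ≤ (3/5)*L*h^2*(k:ℝ)^2*K + K := by
      have t := norm_add_le ((vflow g h k (x,v)).1 - (vflow g h k (y,u)).1
        - ((x-y) + ((k:ℝ)*h) • (v-u))) ((x-y) + ((k:ℝ)*h) • (v-u))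
      rw [sub_add_cancel] at t
      have t2 := norm_add_le (x-y) (((k:ℝ)*h) • (v-u))
      have t3 : ‖((k:ℝ)*h) • (v-u)‖ = ((k:ℝ)*h) * ‖v-u‖ := rsmul_norm (by positivity) _
      have t4 : ((k:ℝ)*h) * ‖v-u‖ ≤ ((N:ℝ)*h) * ‖v-u‖ := by
        have : (k:ℝ)*h ≤ (N:ℝ)*h := by nlinarith
        exact mul_le_mul_of_nonneg_right this (norm_nonneg _)
      rw [hK]
      linarith [hd]
    have hgd : ‖g ((vflow g h k (x,v)).1) - g ((vflow g h k (y,u)).1)‖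
        ≤ L * ((3/5)*L*h^2*(k:ℝ)^2*K + K) :=
      le_trans (hg _ _) (mul_le_mul_of_nonneg_left hsize hL)
    -- position step
    have keyd : (vflow g h (k+1) (x,v)).1 - (vflow g h (k+1) (y,u)).1
          - ((x-y) + (((((k+1):ℕ)):ℝ)*h) • (v-u))
        = ((vflow g h k (x,v)).1 - (vflow g h k (y,u)).1 - ((x-y) + ((k:ℝ)*h) • (v-u)))
          + h • ((vflow g h k (x,v)).2 - (vflow g h k (y,u)).2 - (v-u))
          - (h^2/2) • (g ((vflow g h k (x,v)).1) - g ((vflow g h k (y,u)).1)) := by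
      rw [vflow_succ_fst, vflow_succ_fst]; push_cast; module
    have goal1 : ‖(vflow g h (k+1) (x,v)).1 - (vflow g h (k+1) (y,u)).1
        - ((x-y) + (((((k+1):ℕ)):ℝ)*h) • (v-u))‖ ≤ (3/5)*L*h^2*((k:ℝ)+1)^2*K := by
      rw [keyd]
      have t1 := norm_sub_le
        (((vflow g h k (x,v)).1 - (vflow g h k (y,u)).1 - ((x-y) + ((k:ℝ)*h) • (v-u)))
          + h • ((vflow g h k (x,v)).2 - (vflow g h k (y,u)).2 - (v-u)))
        ((h^2/2) • (g ((vflow g h k (x,v)).1) - g ((vflow g h k (y,u)).1)))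
      have t2 := norm_add_le
        ((vflow g h k (x,v)).1 - (vflow g h k (y,u)).1 - ((x-y) + ((k:ℝ)*h) • (v-u)))
        (h • ((vflow g h k (x,v)).2 - (vflow g h k (y,u)).2 - (v-u)))
      have s1 : ‖h • ((vflow g h k (x,v)).2 - (vflow g h k (y,u)).2 - (v-u))‖
          = h * ‖(vflow g h k (x,v)).2 - (vflow g h k (y,u)).2 - (v-u)‖ :=
        rsmul_norm hh.le _
      have s2 : ‖(h^2/2) • (g ((vflow g h k (x,v)).1) - g ((vflow g h k (y,u)).1))‖
          = (h^2/2) * ‖g ((vflow g h k (x,v)).1) - g ((vflow g h k (y,u)).1)‖ :=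
        rsmul_norm (by positivity) _
      rw [s1] at t2; rw [s2] at t1
      have c2 : (h^2/2) * ‖g ((vflow g h k (x,v)).1) - g ((vflow g h k (y,u)).1)‖
          ≤ (h^2/2) * (L * ((3/5)*L*h^2*(k:ℝ)^2*K + K)) :=
        mul_le_mul_of_nonneg_left hgd (by positivity)
      have c3 : (L*((k:ℝ)*h)^2)*(L*h^2*K) ≤ (1/6)*(L*h^2*K) :=
        mul_le_mul_of_nonneg_right q1 (by positivity)
      have c4 : h * ‖(vflow g h k (x,v)).2 - (vflow g h k (y,u)).2 - (v-u)‖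
          ≤ h * ((6/5)*L*K*((k:ℝ)*h)) := mul_le_mul_of_nonneg_left he hh.le
      have c5 : 0 ≤ L*h^2*K := by positivity
      nlinarith [t1, t2, hd]
    refine ⟨?_, ?_⟩
    · have e1 : ((((k+1):ℕ)):ℝ) = (k:ℝ)+1 := by push_cast; ring
      calc ‖(vflow g h (k+1) (x,v)).1 - (vflow g h (k+1) (y,u)).1
            - ((x-y) + (((k+1:ℕ):ℝ)*h) • (v-u))‖
          = ‖(vflow g h (k+1) (x,v)).1 - (vflow g h (k+1) (y,u)).1
            - ((x-y) + (((((k+1):ℕ)):ℝ)*h) • (v-u))‖ := rfl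
        _ ≤ (3/5)*L*h^2*((k:ℝ)+1)^2*K := goal1
        _ = (3/5)*L*h^2*((((k+1):ℕ)):ℝ)^2*K := by rw [e1]
    · -- velocity step
      have hsize1 : ‖(vflow g h (k+1) (x,v)).1 - (vflow g h (k+1) (y,u)).1‖
          ≤ (3/5)*L*h^2*((k:ℝ)+1)^2*K + K := by
        have t := norm_add_le ((vflow g h (k+1) (x,v)).1 - (vflow g h (k+1) (y,u)).1
          - ((x-y) + (((((k+1):ℕ)):ℝ)*h) • (v-u))) ((x-y) + (((((k+1):ℕ)):ℝ)*h) • (v-u))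
        rw [sub_add_cancel] at t
        have t2 := norm_add_le (x-y) ((((((k+1):ℕ)):ℝ)*h) • (v-u))
        have t3 : ‖(((((k+1):ℕ)):ℝ)*h) • (v-u)‖ = (((k:ℝ)+1)*h) * ‖v-u‖ := by
          rw [show (((((k+1):ℕ)):ℝ)*h) • (v-u) = (((k:ℝ)+1)*h) • (v-u) by push_cast; module]
          exact rsmul_norm (by positivity) _
        have t4 : (((k:ℝ)+1)*h) * ‖v-u‖ ≤ ((N:ℝ)*h) * ‖v-u‖ := by
          have : ((k:ℝ)+1)*h ≤ (N:ℝ)*h := by nlinarith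
          exact mul_le_mul_of_nonneg_right this (norm_nonneg _)
        rw [hK]
        linarith [goal1]
      have hgd1 : ‖g ((vflow g h (k+1) (x,v)).1) - g ((vflow g h (k+1) (y,u)).1)‖
          ≤ L * ((3/5)*L*h^2*((k:ℝ)+1)^2*K + K) :=
        le_trans (hg _ _) (mul_le_mul_of_nonneg_left hsize1 hL)
      have keye : (vflow g h (k+1) (x,v)).2 - (vflow g h (k+1) (y,u)).2 - (v-u)
          = ((vflow g h k (x,v)).2 - (vflow g h k (y,u)).2 - (v-u))
            - (h/2) • ((g ((vflow g h k (x,v)).1) - g ((vflow g h k (y,u)).1))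
              + (g ((vflow g h (k+1) (x,v)).1) - g ((vflow g h (k+1) (y,u)).1))) := by
        rw [vflow_succ_snd, vflow_succ_snd]; module
      rw [keye]
      have t1 := norm_sub_le ((vflow g h k (x,v)).2 - (vflow g h k (y,u)).2 - (v-u))
        ((h/2) • ((g ((vflow g h k (x,v)).1) - g ((vflow g h k (y,u)).1))
          + (g ((vflow g h (k+1) (x,v)).1) - g ((vflow g h (k+1) (y,u)).1))))
      have s1 : ‖(h/2) • ((g ((vflow g h k (x,v)).1) - g ((vflow g h k (y,u)).1))
          + (g ((vflow g h (k+1) (x,v)).1) - g ((vflow g h (k+1) (y,u)).1)))‖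
          = (h/2) * ‖(g ((vflow g h k (x,v)).1) - g ((vflow g h k (y,u)).1))
            + (g ((vflow g h (k+1) (x,v)).1) - g ((vflow g h (k+1) (y,u)).1))‖ :=
        rsmul_norm (by positivity) _
      rw [s1] at t1
      have t2 := norm_add_le (g ((vflow g h k (x,v)).1) - g ((vflow g h k (y,u)).1))
        (g ((vflow g h (k+1) (x,v)).1) - g ((vflow g h (k+1) (y,u)).1))
      have c1 : (h/2) * ‖(g ((vflow g h k (x,v)).1) - g ((vflow g h k (y,u)).1))
          + (g ((vflow g h (k+1) (x,v)).1) - g ((vflow g h (k+1) (y,u)).1))‖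
          ≤ (h/2) * (L * ((3/5)*L*h^2*(k:ℝ)^2*K + K) + L * ((3/5)*L*h^2*((k:ℝ)+1)^2*K + K)) := by
        refine mul_le_mul_of_nonneg_left ?_ (by positivity)
        linarith [t2, hgd, hgd1]
      have c3 : (L*((k:ℝ)*h)^2)*(L*h*K) ≤ (1/6)*(L*h*K) :=
        mul_le_mul_of_nonneg_right q1 (by positivity)
      have c3' : (L*(((k:ℝ)+1)*h)^2)*(L*h*K) ≤ (1/6)*(L*h*K) :=
        mul_le_mul_of_nonneg_right q1' (by positivity)
      have c5 : 0 ≤ L*h*K := by positivity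
      have e1 : ((((k+1):ℕ)):ℝ) = (k:ℝ)+1 := by push_cast; ring
      rw [e1]
      exact stepD2_real L K h (k:ℝ) _ _ _ t1 he c1 c3 c3' c5
end D
section E
variable {E : Type*} [NormedAddCommGroup E] [NormedSpace ℝ E]

lemma vjac_fst_norm_le (H : ℕ → E →L[ℝ] E) {h L : ℝ} (hh : 0 < h) (hL : 0 ≤ L)
    (hHL : ∀ j, ‖H j‖ ≤ L) (N : ℕ)
    (hsmall : L * (((N:ℝ)*h)^2 + ((N:ℝ)*h)*h) ≤ 1/6)
    {k : ℕ} (hk : k ≤ N) : ‖(vjac H h k).1‖ ≤ (6/5)*((k:ℝ)*h) := by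
  have ha := (vjac_bound H hh hL hHL N hsmall k hk).1
  have h1 := norm_add_le ((vjac H h k).1 - ((k:ℝ)*h) • (1 : E →L[ℝ] E)) (((k:ℝ)*h) • 1)
  rw [sub_add_cancel] at h1
  have h2 := norm_one_smul_le (E := E) (c := (k:ℝ)*h) (by positivity)
  linarith

lemma stepE1_real (L M h kk Nn a b : ℝ) (hh : 0 < h) (hL : 0 ≤ L) (hM : 0 ≤ M)
    (hk0 : 0 ≤ kk) (hkN : kk + 1 ≤ Nn)
    (hsm : L*((Nn*h)^2+(Nn*h)*h) ≤ 1/6)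
    (ha : a ≤ (3/5)*M*(kk*h)^3) (hb : b ≤ (13/10)*M*(kk*h)^2) :
    a + h*b + (h^2/2)*(L*((3/5)*M*(kk*h)^3) + M*((6/5)*(kk*h))) ≤ (3/5)*M*((kk+1)*h)^3 := by
  have hNh : (0:ℝ) ≤ Nn*h := by nlinarith
  have q1 : L*(kk*h)^2 ≤ 1/6 := by
    nlinarith [mul_le_mul_of_nonneg_left
      (mul_le_mul (by nlinarith : kk*h ≤ Nn*h) (by nlinarith : kk*h ≤ Nn*h)
        (by positivity) hNh) hL, mul_nonneg (mul_nonneg hL hNh) hh.le]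
  have r1 : L*(kk*h)^2*(M*kk*h^3) ≤ (1/6)*(M*kk*h^3) :=
    mul_le_mul_of_nonneg_right q1 (by positivity)
  nlinarith [mul_nonneg (mul_nonneg hM (pow_nonneg hh.le 3)) hk0,
    mul_nonneg (mul_nonneg hM (pow_nonneg hh.le 3)) (mul_nonneg hk0 hk0),
    mul_nonneg hM (pow_nonneg hh.le 3)]

lemma stepE2_real (L M h kk Nn b : ℝ) (hh : 0 < h) (hL : 0 ≤ L) (hM : 0 ≤ M)
    (hk0 : 0 ≤ kk) (hkN : kk + 1 ≤ Nn)
    (hsm : L*((Nn*h)^2+(Nn*h)*h) ≤ 1/6)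
    (hb : b ≤ (13/10)*M*(kk*h)^2) :
    b + (h/2)*((L*((3/5)*M*(kk*h)^3) + M*((6/5)*(kk*h)))
      + (L*((3/5)*M*((kk+1)*h)^3) + M*((6/5)*((kk+1)*h)))) ≤ (13/10)*M*((kk+1)*h)^2 := by
  have hNh : (0:ℝ) ≤ Nn*h := by nlinarith
  have q1 : L*(kk*h)^2 ≤ 1/6 := by
    nlinarith [mul_le_mul_of_nonneg_left
      (mul_le_mul (by nlinarith : kk*h ≤ Nn*h) (by nlinarith : kk*h ≤ Nn*h)
        (by positivity) hNh) hL, mul_nonneg (mul_nonneg hL hNh) hh.le]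
  have q1' : L*((kk+1)*h)^2 ≤ 1/6 := by
    nlinarith [mul_le_mul_of_nonneg_left
      (mul_le_mul (by nlinarith : (kk+1)*h ≤ Nn*h) (by nlinarith : (kk+1)*h ≤ Nn*h)
        (by positivity) hNh) hL, mul_nonneg (mul_nonneg hL hNh) hh.le]
  have r1 : L*(kk*h)^2*(M*kk*h^2) ≤ (1/6)*(M*kk*h^2) :=
    mul_le_mul_of_nonneg_right q1 (by positivity)
  have r1' : L*((kk+1)*h)^2*(M*(kk+1)*h^2) ≤ (1/6)*(M*(kk+1)*h^2) :=
    mul_le_mul_of_nonneg_right q1' (by positivity)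
  nlinarith [mul_nonneg (mul_nonneg hM (sq_nonneg h)) hk0,
    mul_nonneg hM (sq_nonneg h)]

lemma vjac_diff_bound (H H' : ℕ → E →L[ℝ] E) {h L M : ℝ} (hh : 0 < h) (hL : 0 ≤ L)
    (hM : 0 ≤ M) (hHL : ∀ j, ‖H j‖ ≤ L) (hH'L : ∀ j, ‖H' j‖ ≤ L) (N : ℕ)
    (hdiff : ∀ j, j ≤ N → ‖H j - H' j‖ ≤ M)
    (hsmall : L * (((N:ℝ)*h)^2 + ((N:ℝ)*h)*h) ≤ 1/6) :
    ∀ k, k ≤ N →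
      ‖(vjac H h k).1 - (vjac H' h k).1‖ ≤ (3/5)*M*((k:ℝ)*h)^3 ∧
      ‖(vjac H h k).2 - (vjac H' h k).2‖ ≤ (13/10)*M*((k:ℝ)*h)^2 := by
  intro k
  induction k with
  | zero => intro _; simp [vjac_zero]
  | succ k IH =>
    intro hk1
    obtain ⟨ha, hb⟩ := IH (Nat.le_of_succ_le hk1)
    have hk' : (k:ℝ) + 1 ≤ (N:ℝ) := by exact_mod_cast hk1
    have hk0 : (0:ℝ) ≤ (k:ℝ) := Nat.cast_nonneg k
    have nAy : ‖(vjac H' h k).1‖ ≤ (6/5)*((k:ℝ)*h) :=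
      vjac_fst_norm_le H' hh hL hH'L N hsmall (Nat.le_of_succ_le hk1)
    have nAy1 : ‖(vjac H' h (k+1)).1‖ ≤ (6/5)*(((k+1:ℕ):ℝ)*h) :=
      vjac_fst_norm_le H' hh hL hH'L N hsmall hk1
    -- compositions
    have hcomp : (H k).comp ((vjac H h k).1) - (H' k).comp ((vjac H' h k).1)
        = (H k).comp ((vjac H h k).1 - (vjac H' h k).1)
          + (H k - H' k).comp ((vjac H' h k).1) := by
      rw [ContinuousLinearMap.comp_sub, ContinuousLinearMap.sub_comp]; abel
    have hcomp1 : (H (k+1)).comp ((vjac H h (k+1)).1) - (H' (k+1)).comp ((vjac H' h (k+1)).1)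
        = (H (k+1)).comp ((vjac H h (k+1)).1 - (vjac H' h (k+1)).1)
          + (H (k+1) - H' (k+1)).comp ((vjac H' h (k+1)).1) := by
      rw [ContinuousLinearMap.comp_sub, ContinuousLinearMap.sub_comp]; abel
    -- first component step
    have keyA : (vjac H h (k+1)).1 - (vjac H' h (k+1)).1
        = ((vjac H h k).1 - (vjac H' h k).1) + h • ((vjac H h k).2 - (vjac H' h k).2)
          - (h^2/2) • ((H k).comp ((vjac H h k).1) - (H' k).comp ((vjac H' h k).1)) := by
      rw [vjac_succ_fst, vjac_succ_fst]; module
    rw [hcomp] at keyA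
    have nc1 : ‖(H k).comp ((vjac H h k).1 - (vjac H' h k).1)‖
        ≤ L * ((3/5)*M*((k:ℝ)*h)^3) :=
      le_trans (ContinuousLinearMap.opNorm_comp_le _ _)
        (mul_le_mul (hHL k) ha (norm_nonneg _) hL)
    have nc2 : ‖(H k - H' k).comp ((vjac H' h k).1)‖ ≤ M * ((6/5)*((k:ℝ)*h)) :=
      le_trans (ContinuousLinearMap.opNorm_comp_le _ _)
        (mul_le_mul (hdiff k (Nat.le_of_succ_le hk1)) nAy (norm_nonneg _) hM)
    have goal1 : ‖(vjac H h (k+1)).1 - (vjac H' h (k+1)).1‖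
        ≤ (3/5)*M*(((k:ℝ)+1)*h)^3 := by
      rw [keyA]
      have t1 := norm_sub_le
        (((vjac H h k).1 - (vjac H' h k).1) + h • ((vjac H h k).2 - (vjac H' h k).2))
        ((h^2/2) • ((H k).comp ((vjac H h k).1 - (vjac H' h k).1)
          + (H k - H' k).comp ((vjac H' h k).1)))
      have t2 := norm_add_le ((vjac H h k).1 - (vjac H' h k).1)
        (h • ((vjac H h k).2 - (vjac H' h k).2))
      have s1 : ‖h • ((vjac H h k).2 - (vjac H' h k).2)‖
          = h * ‖(vjac H h k).2 - (vjac H' h k).2‖ := rsmul_norm_clm hh.le _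
      have s2 : ‖(h^2/2) • ((H k).comp ((vjac H h k).1 - (vjac H' h k).1)
          + (H k - H' k).comp ((vjac H' h k).1))‖
          = (h^2/2) * ‖(H k).comp ((vjac H h k).1 - (vjac H' h k).1)
            + (H k - H' k).comp ((vjac H' h k).1)‖ := rsmul_norm_clm (by positivity) _
      rw [s1] at t2; rw [s2] at t1
      have t3 := norm_add_le ((H k).comp ((vjac H h k).1 - (vjac H' h k).1))
        ((H k - H' k).comp ((vjac H' h k).1))
      have c2 : (h^2/2) * ‖(H k).comp ((vjac H h k).1 - (vjac H' h k).1)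
          + (H k - H' k).comp ((vjac H' h k).1)‖
          ≤ (h^2/2) * (L*((3/5)*M*((k:ℝ)*h)^3) + M*((6/5)*((k:ℝ)*h))) := by
        refine mul_le_mul_of_nonneg_left ?_ (by positivity)
        linarith [t3, nc1, nc2]
      have hb' : h * ‖(vjac H h k).2 - (vjac H' h k).2‖ ≤ h * ((13/10)*M*((k:ℝ)*h)^2) :=
        mul_le_mul_of_nonneg_left hb hh.le
      have := stepE1_real L M h (k:ℝ) (N:ℝ)
        (‖(vjac H h k).1 - (vjac H' h k).1‖) (‖(vjac H h k).2 - (vjac H' h k).2‖)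
        hh hL hM hk0 hk' hsmall ha hb
      linarith [t1, t2, this]
    constructor
    · rw [show (((k+1:ℕ)):ℝ) = (k:ℝ)+1 by push_cast; ring]
      exact goal1
    · -- second component step
      have keyB : (vjac H h (k+1)).2 - (vjac H' h (k+1)).2
          = ((vjac H h k).2 - (vjac H' h k).2)
            - (h/2) • (((H k).comp ((vjac H h k).1) - (H' k).comp ((vjac H' h k).1))
              + ((H (k+1)).comp ((vjac H h (k+1)).1)
                - (H' (k+1)).comp ((vjac H' h (k+1)).1))) := by
        rw [vjac_succ_snd, vjac_succ_snd]; module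
      rw [hcomp, hcomp1] at keyB
      rw [keyB]
      have nc3 : ‖(H (k+1)).comp ((vjac H h (k+1)).1 - (vjac H' h (k+1)).1)‖
          ≤ L * ((3/5)*M*(((k:ℝ)+1)*h)^3) :=
        le_trans (ContinuousLinearMap.opNorm_comp_le _ _)
          (mul_le_mul (hHL (k+1)) goal1 (norm_nonneg _) hL)
      have nc4 : ‖(H (k+1) - H' (k+1)).comp ((vjac H' h (k+1)).1)‖
          ≤ M * ((6/5)*(((k:ℝ)+1)*h)) := by
        refine le_trans (ContinuousLinearMap.opNorm_comp_le _ _) ?_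
        have := nAy1
        rw [show (((k+1:ℕ)):ℝ) = (k:ℝ)+1 by push_cast; ring] at this
        exact mul_le_mul (hdiff (k+1) hk1) this (norm_nonneg _) hM
      have t1 := norm_sub_le ((vjac H h k).2 - (vjac H' h k).2)
        ((h/2) • (((H k).comp ((vjac H h k).1 - (vjac H' h k).1)
            + (H k - H' k).comp ((vjac H' h k).1))
          + ((H (k+1)).comp ((vjac H h (k+1)).1 - (vjac H' h (k+1)).1)
            + (H (k+1) - H' (k+1)).comp ((vjac H' h (k+1)).1))))
      have s1 : ‖(h/2) • (((H k).comp ((vjac H h k).1 - (vjac H' h k).1)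
            + (H k - H' k).comp ((vjac H' h k).1))
          + ((H (k+1)).comp ((vjac H h (k+1)).1 - (vjac H' h (k+1)).1)
            + (H (k+1) - H' (k+1)).comp ((vjac H' h (k+1)).1)))‖
          = (h/2) * ‖((H k).comp ((vjac H h k).1 - (vjac H' h k).1)
            + (H k - H' k).comp ((vjac H' h k).1))
          + ((H (k+1)).comp ((vjac H h (k+1)).1 - (vjac H' h (k+1)).1)
            + (H (k+1) - H' (k+1)).comp ((vjac H' h (k+1)).1))‖ :=
        rsmul_norm_clm (by positivity) _
      rw [s1] at t1
      have t2 := norm_add_le ((H k).comp ((vjac H h k).1 - (vjac H' h k).1)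
          + (H k - H' k).comp ((vjac H' h k).1))
        ((H (k+1)).comp ((vjac H h (k+1)).1 - (vjac H' h (k+1)).1)
          + (H (k+1) - H' (k+1)).comp ((vjac H' h (k+1)).1))
      have t3 := norm_add_le ((H k).comp ((vjac H h k).1 - (vjac H' h k).1))
        ((H k - H' k).comp ((vjac H' h k).1))
      have t4 := norm_add_le ((H (k+1)).comp ((vjac H h (k+1)).1 - (vjac H' h (k+1)).1))
        ((H (k+1) - H' (k+1)).comp ((vjac H' h (k+1)).1))
      have c1 : (h/2) * ‖((H k).comp ((vjac H h k).1 - (vjac H' h k).1)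
            + (H k - H' k).comp ((vjac H' h k).1))
          + ((H (k+1)).comp ((vjac H h (k+1)).1 - (vjac H' h (k+1)).1)
            + (H (k+1) - H' (k+1)).comp ((vjac H' h (k+1)).1))‖
          ≤ (h/2) * ((L*((3/5)*M*((k:ℝ)*h)^3) + M*((6/5)*((k:ℝ)*h)))
            + (L*((3/5)*M*(((k:ℝ)+1)*h)^3) + M*((6/5)*(((k:ℝ)+1)*h)))) := by
        refine mul_le_mul_of_nonneg_left ?_ (by positivity)
        linarith [t2, t3, t4, nc1, nc2, nc3, nc4]
      have := stepE2_real L M h (k:ℝ) (N:ℝ) (‖(vjac H h k).2 - (vjac H' h k).2‖)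
        hh hL hM hk0 hk' hsmall hb
      rw [show (((k+1:ℕ)):ℝ) = (k:ℝ)+1 by push_cast; ring]
      linarith [t1, c1, this]
end E

/-- One-shot coupling bound for the Jacobian of the velocity matching map `Φ`
defined by `q̃_T(x,v) = q̃_T(y, Φ(v))` (Lemma `oneshot:1:b`):
`‖DΦ(v) − I_d‖ ≤ (1/2) min(1, 11 L_H T² ‖x − y‖)`. -/
theorem oneshot_jacobian_bound {d : ℕ}
    (U : EuclideanSpace ℝ (Fin d) → ℝ)
    (gradU : EuclideanSpace ℝ (Fin d) → EuclideanSpace ℝ (Fin d))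
    (hess : EuclideanSpace ℝ (Fin d) →
      (EuclideanSpace ℝ (Fin d) →L[ℝ] EuclideanSpace ℝ (Fin d)))
    (L LH T h : ℝ) (N : ℕ)
    (hmin : ∀ x, U 0 ≤ U x) (hU0 : U 0 = 0)
    (hgrad : ∀ x, HasFDerivAt U ((innerSL ℝ) (gradU x)) x)
    (hhess : ∀ x, HasFDerivAt gradU (hess x) x)
    (hL : ∀ x, ‖hess x‖ ≤ L)
    (hLH : ∀ x y, ‖hess x - hess y‖ ≤ LH * ‖x - y‖)
    (hT : 0 < T) (hh : 0 < h) (hN : 0 < N) (hTh : T = N * h)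
    (hsmall : L * (T^2 + T * h) ≤ 1/6)
    (q w : EuclideanSpace ℝ (Fin d) → EuclideanSpace ℝ (Fin d) → ℝ →
      EuclideanSpace ℝ (Fin d))
    (hq : ∀ x v t, q x v t = x + ∫ s in (0:ℝ)..t,
      (w x v (gridFloor h s) - (s - gridFloor h s) • gradU (q x v (gridFloor h s))))
    (hw : ∀ x v t, w x v t = v - (1/2 : ℝ) • ∫ s in (0:ℝ)..t,
      (gradU (q x v (gridFloor h s)) + gradU (q x v (gridCeil h s))))
    (x y : EuclideanSpace ℝ (Fin d))
    (Φ : EuclideanSpace ℝ (Fin d) → EuclideanSpace ℝ (Fin d))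
    (Φ' : EuclideanSpace ℝ (Fin d) →
      (EuclideanSpace ℝ (Fin d) →L[ℝ] EuclideanSpace ℝ (Fin d)))
    (hΦ' : ∀ v, HasFDerivAt Φ (Φ' v) v)
    (hΦ : ∀ v, q x v T = q y (Φ v) T) :
    ∀ v, ‖Φ' v - ContinuousLinearMap.id ℝ (EuclideanSpace ℝ (Fin d))‖ ≤
      (1/2) * min 1 (11 * LH * T^2 * ‖x - y‖) := by
  intro v
  rcases Nat.eq_zero_or_pos d with hd | hd
  · -- degenerate case `d = 0`
    subst hd
    haveI hsub : Subsingleton (EuclideanSpace ℝ (Fin 0)) :=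
      ⟨fun a b => WithLp.ofLp_injective 2 (funext fun i => i.elim0)⟩
    have hxy : ‖x - y‖ = 0 := by
      rw [Subsingleton.elim x y, sub_self, norm_zero]
    have h0 : Φ' v - ContinuousLinearMap.id ℝ (EuclideanSpace ℝ (Fin 0)) = 0 := by
      ext z i; exact i.elim0
    rw [h0, norm_zero, hxy]
    norm_num
  · subst hTh
    have hNh0 : (0:ℝ) < (N:ℝ)*h := by positivity
    have hL0 : 0 ≤ L := le_trans (norm_nonneg _) (hL 0)
    have hLH0 : 0 ≤ LH := by
      have h1 := hLH (EuclideanSpace.single (⟨0, hd⟩ : Fin d) (1:ℝ)) 0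
      have h2 : ‖(EuclideanSpace.single (⟨0, hd⟩ : Fin d) (1:ℝ)) - 0‖ = 1 := by
        rw [sub_zero, EuclideanSpace.norm_single]; norm_num
      rw [h2, mul_one] at h1
      exact le_trans (norm_nonneg _) h1
    have lip : ∀ a b : (EuclideanSpace ℝ (Fin d)), ‖gradU a - gradU b‖ ≤ L * ‖a - b‖ := fun a b =>
      Convex.norm_image_sub_le_of_norm_hasFDerivWithin_le
        (fun z _ => (hhess z).hasFDerivWithinAt) (fun z _ => hL z) convex_univ
        (Set.mem_univ b) (Set.mem_univ a)
    set u := Φ v with hu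
    have gridx : ∀ v' : (EuclideanSpace ℝ (Fin d)), ∀ k : ℕ,
        q x v' ((k:ℝ)*h) = (vflow gradU h k (x, v')).1 ∧
        w x v' ((k:ℝ)*h) = (vflow gradU h k (x, v')).2 :=
      fun v' => grid_eq gradU hh q w x v' (hq x v') (hw x v')
    have gridy : ∀ v' : (EuclideanSpace ℝ (Fin d)), ∀ k : ℕ,
        q y v' ((k:ℝ)*h) = (vflow gradU h k (y, v')).1 ∧
        w y v' ((k:ℝ)*h) = (vflow gradU h k (y, v')).2 :=
      fun v' => grid_eq gradU hh q w y v' (hq y v') (hw y v')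
    have hQend : (vflow gradU h N (x, v)).1 = (vflow gradU h N (y, u)).1 := by
      rw [← (gridx v N).1, ← (gridy u N).1]
      exact hΦ v
    -- trajectory difference bounds
    have tdiff := vflow_diff_bound gradU hL0 lip hh N hsmall x v y u
    have hK0 : (0:ℝ) ≤ ‖x - y‖ + ((N:ℝ)*h)*‖v - u‖ := by positivity
    have hend : ‖(x - y) + (((N:ℝ))*h) • (v - u)‖
        ≤ (3/5)*L*h^2*(N:ℝ)^2*(‖x - y‖ + ((N:ℝ)*h)*‖v - u‖) := by
      have t := (tdiff N le_rfl).1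
      rw [hQend, sub_self, zero_sub, norm_neg] at t
      exact t
    have hLT2 : L*((N:ℝ)*h)^2 ≤ 1/6 := by
      nlinarith [mul_nonneg (mul_nonneg hL0 hNh0.le) hh.le]
    have hend' : ‖(x - y) + (((N:ℝ))*h) • (v - u)‖
        ≤ (‖x - y‖ + ((N:ℝ)*h)*‖v - u‖)/10 := by
      have c := mul_le_mul_of_nonneg_right hLT2 hK0
      nlinarith [hend]
    have hsmulN : ‖(((N:ℝ))*h) • (v - u)‖ = ((N:ℝ)*h)*‖v - u‖ :=
      rsmul_norm hNh0.le _
    have hTEv : ((N:ℝ)*h)*‖v - u‖ ≤ (11/9)*‖x - y‖ := by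
      have tri : ‖(((N:ℝ))*h) • (v - u)‖
          ≤ ‖(x - y) + (((N:ℝ))*h) • (v - u)‖ + ‖x - y‖ := by
        have := norm_sub_le ((x - y) + (((N:ℝ))*h) • (v - u)) (x - y)
        rw [add_sub_cancel_left] at this
        linarith
      rw [hsmulN] at tri
      linarith [hend']
    have hKD : ‖x - y‖ + ((N:ℝ)*h)*‖v - u‖ ≤ (20/9)*‖x - y‖ := by linarith
    -- uniform closeness of trajectories
    have hdelta : ∀ j, j ≤ N →
        ‖(vflow gradU h j (x, v)).1 - (vflow gradU h j (y, u)).1‖ ≤ (22/9)*‖x - y‖ := by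
      intro j hj
      have t := (tdiff j hj).1
      have tri := norm_add_le
        ((vflow gradU h j (x, v)).1 - (vflow gradU h j (y, u)).1
          - ((x - y) + ((j:ℝ)*h) • (v - u))) ((x - y) + ((j:ℝ)*h) • (v - u))
      rw [sub_add_cancel] at tri
      have tri2 := norm_add_le (x - y) (((j:ℝ)*h) • (v - u))
      have s : ‖((j:ℝ)*h) • (v - u)‖ = ((j:ℝ)*h)*‖v - u‖ := rsmul_norm (by positivity) _
      have hjN : (j:ℝ) ≤ (N:ℝ) := by exact_mod_cast hj
      have s2 : ((j:ℝ)*h)*‖v - u‖ ≤ ((N:ℝ)*h)*‖v - u‖ := by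
        have : (j:ℝ)*h ≤ (N:ℝ)*h := by nlinarith
        exact mul_le_mul_of_nonneg_right this (norm_nonneg _)
      have qj : L*((j:ℝ)*h)^2 ≤ 1/6 := by
        have h1 : (j:ℝ)*h ≤ (N:ℝ)*h := by nlinarith
        nlinarith [mul_le_mul_of_nonneg_left
          (mul_le_mul h1 h1 (by positivity) hNh0.le) hL0,
          mul_nonneg (mul_nonneg hL0 hNh0.le) hh.le]
      have dj : (3/5)*L*h^2*(j:ℝ)^2*(‖x - y‖ + ((N:ℝ)*h)*‖v - u‖)
          ≤ (‖x - y‖ + ((N:ℝ)*h)*‖v - u‖)/10 := by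
        have c := mul_le_mul_of_nonneg_right qj hK0
        nlinarith
      linarith [t]
    -- Jacobians along both trajectories
    have hAx := (vflow_hasFDerivAt gradU hess hhess h x v N).1
    have hAy := (vflow_hasFDerivAt gradU hess hhess h y u N).1
    set Ax := (vjac (fun j => hess ((vflow gradU h j (x, v)).1)) h N).1 with hAxdef
    set Ay := (vjac (fun j => hess ((vflow gradU h j (y, u)).1)) h N).1 with hAydef
    have hfun : (fun v' => (vflow gradU h N (x, v')).1)
        = (fun v' => (vflow gradU h N (y, Φ v')).1) := by
      funext v'
      rw [← (gridx v' N).1, ← (gridy (Φ v') N).1]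
      exact hΦ v'
    have hchain : HasFDerivAt (fun v' => (vflow gradU h N (y, Φ v')).1)
        (Ay.comp (Φ' v)) v := hAy.comp v (hΦ' v)
    have hkey : Ax = Ay.comp (Φ' v) := by
      refine hAx.unique ?_
      rw [hfun]
      exact hchain
    -- bounds on the Jacobians
    have jbx := (vjac_bound (fun j => hess ((vflow gradU h j (x, v)).1)) hh hL0
      (fun j => hL _) N hsmall N le_rfl).1
    have jby := (vjac_bound (fun j => hess ((vflow gradU h j (y, u)).1)) hh hL0
      (fun j => hL _) N hsmall N le_rfl).1
    have hdiffH : ∀ j, j ≤ N →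
        ‖hess ((vflow gradU h j (x, v)).1) - hess ((vflow gradU h j (y, u)).1)‖
          ≤ LH * ((22/9)*‖x - y‖) := fun j hj =>
      le_trans (hLH _ _) (mul_le_mul_of_nonneg_left (hdelta j hj) hLH0)
    have jdiff := (vjac_diff_bound (fun j => hess ((vflow gradU h j (x, v)).1))
      (fun j => hess ((vflow gradU h j (y, u)).1)) hh hL0
      (by positivity : (0:ℝ) ≤ LH * ((22/9)*‖x - y‖))
      (fun j => hL _) (fun j => hL _) N hdiffH hsmall N le_rfl).1
    -- the key operator identity
    have hAS : Ay.comp (Φ' v - 1) = Ax - Ay := by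
      rw [ContinuousLinearMap.comp_sub, ← hkey, ContinuousLinearMap.one_def,
        ContinuousLinearMap.comp_id]
    have hTS : (((N:ℝ)*h)) • (Φ' v - 1)
        = (Ax - Ay) + ((((N:ℝ)*h)) • (1 : (EuclideanSpace ℝ (Fin d)) →L[ℝ] (EuclideanSpace ℝ (Fin d))) - Ay).comp (Φ' v - 1) := by
      have hone : (1 : (EuclideanSpace ℝ (Fin d)) →L[ℝ] (EuclideanSpace ℝ (Fin d))).comp
          (Φ' v - 1) = Φ' v - 1 := by
        rw [ContinuousLinearMap.one_def, ContinuousLinearMap.id_comp]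
      rw [ContinuousLinearMap.sub_comp, ContinuousLinearMap.smul_comp, hone, hAS]
      abel
    have hnorm1 : ((N:ℝ)*h) * ‖Φ' v - 1‖ ≤ ‖Ax - Ay‖
        + (((N:ℝ)*h)/5) * ‖Φ' v - 1‖ := by
      have e1 : ‖(((N:ℝ)*h)) • (Φ' v - 1)‖ = ((N:ℝ)*h) * ‖Φ' v - 1‖ :=
        rsmul_norm_clm hNh0.le _
      have e2 : ‖((((N:ℝ)*h)) • (1 : (EuclideanSpace ℝ (Fin d)) →L[ℝ] (EuclideanSpace ℝ (Fin d))) - Ay).comp (Φ' v - 1)‖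
          ≤ (((N:ℝ)*h)/5) * ‖Φ' v - 1‖ := by
        refine le_trans (ContinuousLinearMap.opNorm_comp_le _ _) ?_
        refine mul_le_mul_of_nonneg_right ?_ (norm_nonneg _)
        calc ‖(((N:ℝ)*h)) • (1 : (EuclideanSpace ℝ (Fin d)) →L[ℝ] (EuclideanSpace ℝ (Fin d))) - Ay‖
            = ‖Ay - (((N:ℝ)*h)) • (1 : (EuclideanSpace ℝ (Fin d)) →L[ℝ] (EuclideanSpace ℝ (Fin d)))‖ := norm_sub_rev _ _
          _ ≤ ((N:ℝ)*h)/5 := jby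
      calc ((N:ℝ)*h) * ‖Φ' v - 1‖ = ‖(((N:ℝ)*h)) • (Φ' v - 1)‖ := e1.symm
        _ = ‖(Ax - Ay) + ((((N:ℝ)*h)) • (1 : (EuclideanSpace ℝ (Fin d)) →L[ℝ] (EuclideanSpace ℝ (Fin d))) - Ay).comp (Φ' v - 1)‖ := by
            rw [hTS]
        _ ≤ ‖Ax - Ay‖ + ‖((((N:ℝ)*h)) • (1 : (EuclideanSpace ℝ (Fin d)) →L[ℝ] (EuclideanSpace ℝ (Fin d))) - Ay).comp (Φ' v - 1)‖ :=
            norm_add_le _ _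
        _ ≤ ‖Ax - Ay‖ + (((N:ℝ)*h)/5) * ‖Φ' v - 1‖ := by linarith [e2]
    -- the two bounds on ‖Ax - Ay‖
    have hdA1 : ‖Ax - Ay‖ ≤ (2/5)*((N:ℝ)*h) := by
      have tri : ‖Ax - Ay‖ ≤ ‖Ax - (((N:ℝ)*h)) • (1 : (EuclideanSpace ℝ (Fin d)) →L[ℝ] (EuclideanSpace ℝ (Fin d)))‖
          + ‖Ay - (((N:ℝ)*h)) • (1 : (EuclideanSpace ℝ (Fin d)) →L[ℝ] (EuclideanSpace ℝ (Fin d)))‖ := by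
        have := norm_sub_le (Ax - (((N:ℝ)*h)) • (1 : (EuclideanSpace ℝ (Fin d)) →L[ℝ] (EuclideanSpace ℝ (Fin d))))
          (Ay - (((N:ℝ)*h)) • (1 : (EuclideanSpace ℝ (Fin d)) →L[ℝ] (EuclideanSpace ℝ (Fin d))))
        rw [sub_sub_sub_cancel_right] at this
        exact this
      linarith [jbx, jby]
    have hdA2 : ‖Ax - Ay‖ ≤ (3/5)*(LH * ((22/9)*‖x - y‖))*(((N:ℝ))*h)^3 := jdiff
    -- conclusion
    rw [show Φ' v - ContinuousLinearMap.id ℝ (EuclideanSpace ℝ (Fin d)) = Φ' v - 1 by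
      rw [ContinuousLinearMap.one_def]]
    have hS0 : 0 ≤ ‖Φ' v - 1‖ := norm_nonneg _
    rcases le_total (1:ℝ) (11 * LH * ((N:ℝ)*h)^2 * ‖x - y‖) with hc | hc
    · rw [min_eq_left hc]
      nlinarith [hnorm1, hdA1, hNh0, hS0]
    · rw [min_eq_right hc]
      nlinarith [hnorm1, hdA2, hNh0, hS0,
        mul_nonneg (mul_nonneg hLH0 (norm_nonneg (x - y))) (pow_nonneg hNh0.le 3),
        mul_pos hNh0 hNh0]
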